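/- For any complex numbers z_1,...,z_n with |z_k| ≥ 1 for all k, one has max_{ν=1,...,n²−n+1} |∑_{k=1}^n z_k^ν| ≥ √n. -/

import Mathlib

open Polynomial Finset Complex

namespace Stmt2Aux

variable {ι : Type*} [DecidableEq ι]

/-- The polynomial `∏ (1 - ζ t • X)`. -/
noncomputable def Ap (s : Finset ι) (ζ : ι → ℂ) : Polynomial ℂ :=
  ∏ t ∈ s, (1 - C (ζ t) * X)

noncomputable def Bp (s : Finset ι) (ζ : ι → ℂ) (ν : ℕ) : Polynomial ℂ :=
  ∑ t ∈ s, C (ζ t ^ ν) * ∏ u ∈ s.erase t, (1 - C (ζ u) * X)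

lemma B_step (s : Finset ι) (ζ : ι → ℂ) (ν : ℕ) :
    Bp s ζ ν = C (∑ t ∈ s, ζ t ^ ν) * Ap s ζ + X * Bp s ζ (ν + 1) := by
  unfold Bp
  rw [map_sum, Finset.sum_mul, Finset.mul_sum, ← Finset.sum_add_distrib]
  refine Finset.sum_congr rfl fun t ht => ?_
  have h1 : Ap s ζ = (1 - C (ζ t) * X) * ∏ u ∈ s.erase t, (1 - C (ζ u) * X) :=
    (Finset.mul_prod_erase s _ ht).symm
  rw [h1, pow_succ, map_mul]
  ring

lemma deriv_prod (s : Finset ι) (f : ι → Polynomial ℂ) :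
    derivative (∏ t ∈ s, f t) = ∑ t ∈ s, (∏ u ∈ s.erase t, f u) * derivative (f t) := by
  induction s using Finset.induction_on with
  | empty => simp
  | @insert a s' ha ih =>
    rw [Finset.prod_insert ha, derivative_mul, Finset.sum_insert ha, ih, Finset.mul_sum,
      Finset.erase_insert ha]
    have hsum : ∀ t ∈ s', (∏ u ∈ (insert a s').erase t, f u) * derivative (f t)
        = f a * ((∏ u ∈ s'.erase t, f u) * derivative (f t)) := by
      intro t ht
      have hta : t ≠ a := fun h => ha (h ▸ ht)
      rw [Finset.erase_insert_of_ne hta.symm,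
        Finset.prod_insert (fun h => ha (Finset.mem_of_mem_erase h))]
      ring
    rw [Finset.sum_congr rfl hsum]
    ring

lemma A_deriv (s : Finset ι) (ζ : ι → ℂ) :
    derivative (Ap s ζ) = -Bp s ζ 1 := by
  unfold Ap Bp
  rw [deriv_prod, ← Finset.sum_neg_distrib]
  refine Finset.sum_congr rfl fun t ht => ?_
  have hd : derivative (1 - C (ζ t) * X) = -C (ζ t) := by
    simp [derivative_sub]
  rw [hd, pow_one]
  ring

lemma B_unfold (s : Finset ι) (ζ : ι → ℂ) (N : ℕ) :
    Bp s ζ 1 = (∑ ν ∈ Finset.Icc 1 N, C (∑ t ∈ s, ζ t ^ ν) * X ^ (ν - 1)) * Ap s ζ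
      + X ^ N * Bp s ζ (N + 1) := by
  induction N with
  | zero =>
      rw [show Finset.Icc 1 0 = (∅ : Finset ℕ) from Finset.Icc_eq_empty (by omega)]
      simp
  | succ N ih =>
      rw [ih, B_step s ζ (N + 1), Finset.sum_Icc_succ_top (by omega : 1 ≤ N + 1)]
      have hNN : N + 1 - 1 = N := by omega
      rw [hNN]
      ring

lemma newton (s : Finset ι) (ζ : ι → ℂ) (j : ℕ) :
    (Ap s ζ).coeff (j + 1) * ((j : ℂ) + 1) =
      -∑ ν ∈ Finset.Icc 1 (j + 1), (∑ t ∈ s, ζ t ^ ν) * (Ap s ζ).coeff (j + 1 - ν) := by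
  have h := A_deriv s ζ
  rw [B_unfold s ζ (j + 1)] at h
  rw [Finset.sum_mul] at h
  have hterm : ∀ ν : ℕ, C (∑ t ∈ s, ζ t ^ ν) * X ^ (ν - 1) * Ap s ζ
      = C (∑ t ∈ s, ζ t ^ ν) * Ap s ζ * X ^ (ν - 1) := fun ν => by ring
  simp only [hterm] at h
  rw [mul_comm (X ^ (j + 1)) (Bp s ζ (j + 1 + 1))] at h
  have h2 := congrArg (fun p : Polynomial ℂ => p.coeff j) h
  simp only [coeff_derivative, coeff_neg, coeff_add, Polynomial.finset_sum_coeff,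
    coeff_mul_X_pow', coeff_C_mul] at h2
  rw [if_neg (by omega : ¬ (j + 1 ≤ j))] at h2
  rw [add_zero] at h2
  rw [h2]
  congr 1
  refine Finset.sum_congr rfl fun ν hν => ?_
  rcases Finset.mem_Icc.mp hν with ⟨h1, hle⟩
  rw [if_pos (by omega : ν - 1 ≤ j)]
  congr 2
  omega

lemma A_coeff_zero (s : Finset ι) (ζ : ι → ℂ) : (Ap s ζ).coeff 0 = 1 := by
  unfold Ap
  rw [Polynomial.coeff_zero_eq_eval_zero, Polynomial.eval_prod]
  simp

lemma A_natDegree (s : Finset ι) (ζ : ι → ℂ) : (Ap s ζ).natDegree ≤ s.card := by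
  unfold Ap
  calc (∏ t ∈ s, (1 - C (ζ t) * X)).natDegree
      ≤ ∑ t ∈ s, (1 - C (ζ t) * X).natDegree := Polynomial.natDegree_prod_le _ _
    _ ≤ ∑ _t ∈ s, 1 := by
        refine Finset.sum_le_sum fun t _ => ?_
        refine le_trans (Polynomial.natDegree_sub_le _ _) ?_
        refine max_le (by simp) ?_
        exact le_trans (Polynomial.natDegree_C_mul_le _ _) Polynomial.natDegree_X_le
    _ = s.card := by simp

lemma coeff_re_nonneg (s : Finset ι) (ζ : ι → ℂ) (r : ℕ → ℝ)
    (hreal : ∀ ν, 1 ≤ ν → ν ≤ s.card + 1 → (∑ t ∈ s, ζ t ^ ν) = (r ν : ℂ))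
    (hneg : ∀ ν, 1 ≤ ν → ν ≤ s.card + 1 → r ν < 0) :
    ∀ j, j ≤ s.card →
      (Ap s ζ).coeff j = (((Ap s ζ).coeff j).re : ℂ) ∧ 0 ≤ ((Ap s ζ).coeff j).re := by
  intro j
  induction j using Nat.strong_induction_on with
  | _ j ih =>
    intro hj
    match j, hj with
    | 0, _ =>
        rw [A_coeff_zero]
        norm_num
    | (j + 1), hj =>
        have hnewton := newton s ζ j
        have hterm : ∀ ν ∈ Finset.Icc 1 (j + 1),
            (∑ t ∈ s, ζ t ^ ν) * (Ap s ζ).coeff (j + 1 - ν)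
              = ((r ν * ((Ap s ζ).coeff (j + 1 - ν)).re : ℝ) : ℂ) := by
          intro ν hν
          rcases Finset.mem_Icc.mp hν with ⟨h1, h2⟩
          have hc := ih (j + 1 - ν) (by omega) (by omega)
          rw [hreal ν h1 (by omega), Complex.ofReal_mul]
          exact congrArg (fun w => ((r ν : ℂ)) * w) hc.1
        rw [Finset.sum_congr rfl hterm, ← Complex.ofReal_sum] at hnewton
        have hsum_nonpos : (∑ ν ∈ Finset.Icc 1 (j + 1),
            r ν * ((Ap s ζ).coeff (j + 1 - ν)).re) ≤ 0 := by
          refine Finset.sum_nonpos fun ν hν => ?_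
          rcases Finset.mem_Icc.mp hν with ⟨h1, h2⟩
          have hc := ih (j + 1 - ν) (by omega) (by omega)
          exact mul_nonpos_of_nonpos_of_nonneg (le_of_lt (hneg ν h1 (by omega))) hc.2
        have hne : ((j : ℂ) + 1) ≠ 0 := by
          have h' : ((j + 1 : ℕ) : ℂ) ≠ 0 := Nat.cast_ne_zero.mpr (Nat.succ_ne_zero j)
          push_cast at h'
          exact h'
        have hco' : (Ap s ζ).coeff (j + 1)
            = (-((∑ ν ∈ Finset.Icc 1 (j + 1), r ν * ((Ap s ζ).coeff (j + 1 - ν)).re : ℝ) : ℂ))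
              / ((j : ℂ) + 1) := by
          rw [eq_div_iff hne]
          exact hnewton
        have hco : (Ap s ζ).coeff (j + 1)
            = ((-(∑ ν ∈ Finset.Icc 1 (j + 1), r ν * ((Ap s ζ).coeff (j + 1 - ν)).re)
                / ((j : ℝ) + 1) : ℝ) : ℂ) := by
          rw [hco']
          push_cast
          ring
        have hre : ((Ap s ζ).coeff (j + 1)).re
            = (-(∑ ν ∈ Finset.Icc 1 (j + 1), r ν * ((Ap s ζ).coeff (j + 1 - ν)).re))
              / ((j : ℝ) + 1) := by
          rw [hco, Complex.ofReal_re]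
        constructor
        · rw [hre, hco]
        · rw [hre]
          apply div_nonneg (neg_nonneg.mpr hsum_nonpos)
          positivity

lemma key (s : Finset ι) (ζ : ι → ℂ) (r : ℕ → ℝ)
    (hreal : ∀ ν, 1 ≤ ν → ν ≤ s.card + 1 → (∑ t ∈ s, ζ t ^ ν) = (r ν : ℂ))
    (hneg : ∀ ν, 1 ≤ ν → ν ≤ s.card + 1 → r ν < 0) : False := by
  have hC := coeff_re_nonneg s ζ r hreal hneg
  have hzero : (Ap s ζ).coeff (s.card + 1) = 0 :=
    Polynomial.coeff_eq_zero_of_natDegree_lt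
      (lt_of_le_of_lt (A_natDegree s ζ) (Nat.lt_succ_self _))
  have hN := newton s ζ s.card
  rw [hzero, zero_mul] at hN
  have hterm : ∀ ν ∈ Finset.Icc 1 (s.card + 1),
      (∑ t ∈ s, ζ t ^ ν) * (Ap s ζ).coeff (s.card + 1 - ν)
        = ((r ν * ((Ap s ζ).coeff (s.card + 1 - ν)).re : ℝ) : ℂ) := by
    intro ν hν
    rcases Finset.mem_Icc.mp hν with ⟨h1, h2⟩
    have hc := hC (s.card + 1 - ν) (by omega)
    rw [hreal ν h1 h2, Complex.ofReal_mul]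
    exact congrArg (fun w => ((r ν : ℂ)) * w) hc.1
  rw [Finset.sum_congr rfl hterm, ← Complex.ofReal_sum] at hN
  have hzero' : (∑ ν ∈ Finset.Icc 1 (s.card + 1),
      r ν * ((Ap s ζ).coeff (s.card + 1 - ν)).re) = 0 := by
    have h0 : ((∑ ν ∈ Finset.Icc 1 (s.card + 1),
        r ν * ((Ap s ζ).coeff (s.card + 1 - ν)).re : ℝ) : ℂ) = 0 := neg_eq_zero.mp hN.symm
    exact_mod_cast h0
  have hsplit := Finset.sum_Icc_succ_top (by omega : 1 ≤ s.card + 1)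
      (fun ν => r ν * ((Ap s ζ).coeff (s.card + 1 - ν)).re)
  rw [hsplit] at hzero'
  have hrest : (∑ ν ∈ Finset.Icc 1 s.card,
      r ν * ((Ap s ζ).coeff (s.card + 1 - ν)).re) ≤ 0 := by
    refine Finset.sum_nonpos fun ν hν => ?_
    rcases Finset.mem_Icc.mp hν with ⟨h1, h2⟩
    have hc := hC (s.card + 1 - ν) (by omega)
    exact mul_nonpos_of_nonpos_of_nonneg (le_of_lt (hneg ν h1 (by omega))) hc.2
  have hlast : r (s.card + 1) * ((Ap s ζ).coeff (s.card + 1 - (s.card + 1))).re < 0 := by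
    have h0 : s.card + 1 - (s.card + 1) = 0 := by omega
    rw [h0, A_coeff_zero]
    simpa using hneg (s.card + 1) (by omega) (by omega)
  linarith

end Stmt2Aux

theorem stmt_2 (n : ℕ) (z : Fin n → ℂ) (hz : ∀ k, 1 ≤ ‖z k‖) :
    ∃ ν : ℕ, 1 ≤ ν ∧ ν ≤ n ^ 2 - n + 1 ∧
      Real.sqrt n ≤ ‖∑ k, z k ^ ν‖ := by
  by_contra hcon
  push_neg at hcon
  set s : Finset (Fin n × Fin n) := (Finset.univ : Finset (Fin n)).offDiag with hs
  have hcard : s.card = n ^ 2 - n := by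
    rw [hs, Finset.offDiag_card, Finset.card_univ, Fintype.card_fin]
    have : n ^ 2 = n * n := sq n
    omega
  set ζ : Fin n × Fin n → ℂ := fun p => z p.1 * (starRingEnd ℂ) (z p.2) with hζ
  set r : ℕ → ℝ := fun ν => ‖∑ k, z k ^ ν‖ ^ 2 - ∑ k, ‖z k‖ ^ (2 * ν) with hr
  have hreal : ∀ ν : ℕ, (∑ p ∈ s, ζ p ^ ν) = (r ν : ℂ) := by
    intro ν
    have expand : ∀ p : Fin n × Fin n, ζ p ^ ν
        = z p.1 ^ ν * (starRingEnd ℂ) (z p.2 ^ ν) := by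
      intro p
      rw [hζ]
      simp [mul_pow, map_pow]
    have hsplit : (∑ p ∈ (Finset.univ : Finset (Fin n)) ×ˢ Finset.univ, ζ p ^ ν)
        = (∑ p ∈ (Finset.univ : Finset (Fin n)).diag, ζ p ^ ν) + ∑ p ∈ s, ζ p ^ ν := by
      rw [hs, ← Finset.sum_union (Finset.disjoint_diag_offDiag _),
        Finset.diag_union_offDiag]
    have hprod : (∑ p ∈ (Finset.univ : Finset (Fin n)) ×ˢ Finset.univ, ζ p ^ ν)
        = ((‖∑ k, z k ^ ν‖ ^ 2 : ℝ) : ℂ) := by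
      simp only [expand]
      have e1 : (∑ x ∈ (Finset.univ : Finset (Fin n)) ×ˢ Finset.univ,
          z x.1 ^ ν * (starRingEnd ℂ) (z x.2 ^ ν))
          = ∑ i : Fin n, ∑ j : Fin n, z i ^ ν * (starRingEnd ℂ) (z j ^ ν) := by
        rw [Finset.sum_product]
      have e2 : (∑ i : Fin n, ∑ j : Fin n, z i ^ ν * (starRingEnd ℂ) (z j ^ ν))
          = (∑ i : Fin n, z i ^ ν) * ∑ j : Fin n, (starRingEnd ℂ) (z j ^ ν) :=
        (Finset.sum_mul_sum _ _ _ _).symm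
      rw [e1, e2, ← map_sum (starRingEnd ℂ),
        Complex.mul_conj, Complex.normSq_eq_norm_sq]
    have hdiag : (∑ p ∈ (Finset.univ : Finset (Fin n)).diag, ζ p ^ ν)
        = ((∑ k, ‖z k‖ ^ (2 * ν) : ℝ) : ℂ) := by
      rw [Finset.sum_diag]
      push_cast
      refine Finset.sum_congr rfl fun k _ => ?_
      rw [expand (k, k), Complex.mul_conj, Complex.normSq_eq_norm_sq,
        norm_pow]
      push_cast
      rw [← pow_mul]
      ring_nf
    have : (∑ p ∈ s, ζ p ^ ν)
        = (∑ p ∈ (Finset.univ : Finset (Fin n)) ×ˢ Finset.univ, ζ p ^ ν)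
          - (∑ p ∈ (Finset.univ : Finset (Fin n)).diag, ζ p ^ ν) :=
      eq_sub_of_add_eq' hsplit.symm
    rw [this, hprod, hdiag, hr]
    push_cast
    ring
  have hD : ∀ ν : ℕ, (n : ℝ) ≤ ∑ k, ‖z k‖ ^ (2 * ν) := by
    intro ν
    calc (n : ℝ) = ∑ _k : Fin n, (1 : ℝ) := by simp
    _ ≤ ∑ k, ‖z k‖ ^ (2 * ν) := by
        refine Finset.sum_le_sum fun k _ => ?_
        calc (1 : ℝ) = 1 ^ (2 * ν) := (one_pow _).symm
        _ ≤ ‖z k‖ ^ (2 * ν) := pow_le_pow_left₀ zero_le_one (hz k) _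
  have hneg : ∀ ν, 1 ≤ ν → ν ≤ s.card + 1 → r ν < 0 := by
    intro ν h1 h2
    have hb : ν ≤ n ^ 2 - n + 1 := by omega
    have hlt := hcon ν h1 hb
    have hnn : (0 : ℝ) ≤ ‖∑ k, z k ^ ν‖ := norm_nonneg _
    have hsq : Real.sqrt n * Real.sqrt n = n := Real.mul_self_sqrt (Nat.cast_nonneg n)
    have h0 : ‖∑ k, z k ^ ν‖ ^ 2 < (n : ℝ) := by
      nlinarith [Real.sqrt_nonneg (n : ℝ)]
    have := hD ν
    rw [hr]
    simp only
    linarith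
  exact Stmt2Aux.key s ζ r (fun ν _ _ => hreal ν) hneg
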